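/- Let n ≥ 5 and let c : Q → Q be any map on the states of the Černý automaton C_n that is not equal to a, not equal to b, and not the identity. Then the DFA C_n^c on alphabet {a,b,c} admits a synchronizing word of length strictly less than (n-1)^2. In other words, for n ≥ 5, C_n admits no non-trivial critical one-symbol extension. -/

import Mathlib

/-- Apply a word (list of transition functions) to a state, left to right. -/
def applyWord {α : Type*} (w : List (α → α)) (q : α) : α :=
  w.foldl (fun s f => f s) q

/-- The Černý symbols on `Fin n` (state `i+1` is index `i`). -/
def cernyA (n : ℕ) [NeZero n] : Fin n → Fin n := fun q => q + 1
def cernyB (n : ℕ) [NeZero n] : Fin n → Fin n := fun q => if q = 0 then 1 else q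

/-- A word over the alphabet `{a, b, c}` of `C_n^c` which synchronizes. -/
def ShortSync (n : ℕ) [NeZero n] (c : Fin n → Fin n) (m : ℕ) : Prop :=
  ∃ w : List (Fin n → Fin n),
    (∀ f ∈ w, f = cernyA n ∨ f = cernyB n ∨ f = c) ∧
    (∃ qs : Fin n, ∀ q : Fin n, applyWord w q = qs) ∧
    w.length < m

open Fin.CommRing Fin.NatCast Fin.IntCast

namespace Cerny18

variable {n : ℕ} [NeZero n]

theorem applyWord_nil (q : α) : applyWord ([] : List (α → α)) q = q := rfl

theorem applyWord_cons (f : α → α) (w : List (α → α)) (q : α) :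
    applyWord (f :: w) q = applyWord w (f q) := rfl

theorem applyWord_append (u v : List (α → α)) (q : α) :
    applyWord (u ++ v) q = applyWord v (applyWord u q) := by
  simp [applyWord, List.foldl_append]

/-- `t` copies of the letter `a`. -/
def Arep (n : ℕ) [NeZero n] (t : ℕ) : List (Fin n → Fin n) := List.replicate t (cernyA n)

/-- Words using only allowed letters. -/
def Good (c : Fin n → Fin n) (w : List (Fin n → Fin n)) : Prop :=
  ∀ f ∈ w, f = cernyA n ∨ f = cernyB n ∨ f = c

theorem Good.append {c : Fin n → Fin n} {u v : List (Fin n → Fin n)}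
    (hu : Good c u) (hv : Good c v) : Good c (u ++ v) := by
  intro f hf
  rcases List.mem_append.1 hf with h | h
  · exact hu f h
  · exact hv f h

theorem good_Arep (c : Fin n → Fin n) (t : ℕ) : Good c (Arep n t) := by
  intro f hf
  exact Or.inl (List.eq_of_mem_replicate hf)

theorem good_b (c : Fin n → Fin n) : Good c [cernyB n] := by
  intro f hf
  simp only [List.mem_singleton] at hf
  exact Or.inr (Or.inl hf)

theorem good_c (c : Fin n → Fin n) : Good c [c] := by
  intro f hf
  simp only [List.mem_singleton] at hf
  exact Or.inr (Or.inr hf)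

theorem apply_Arep (t : ℕ) (q : Fin n) : applyWord (Arep n t) q = q + (t : Fin n) := by
  induction t generalizing q with
  | zero => simp [Arep, applyWord]
  | succ t ih =>
    have : Arep n (t+1) = cernyA n :: Arep n t := rfl
    rw [this, applyWord_cons, ih]
    show cernyA n q + (t : Fin n) = q + ((t+1 : ℕ) : Fin n)
    simp only [cernyA]
    push_cast
    ring

theorem val_one' (hn : 2 ≤ n) : (1 : Fin n).val = 1 := by
  have h1 : ((1:ℕ) : Fin n).val = 1 % n := Fin.val_natCast (n := n) 1
  simpa [Nat.mod_eq_of_lt (by omega : 1 < n)] using h1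

theorem one_ne_zero' (hn : 2 ≤ n) : (1 : Fin n) ≠ 0 := by
  intro h
  have := congrArg Fin.val h
  rw [val_one' hn] at this
  simp at this

theorem b_ne_zero (hn : 2 ≤ n) (q : Fin n) : cernyB n q ≠ 0 := by
  unfold cernyB
  split
  · exact one_ne_zero' hn
  · assumption

theorem b_val_le (hn : 2 ≤ n) (q : Fin n) : (cernyB n q).val ≤ max 1 q.val := by
  unfold cernyB
  split
  · rw [val_one' hn]; simp
  · simp

/-- subtraction of a natural that fits: value subtracts. -/
theorem sub_nat_val (q : Fin n) (j : ℕ) (h : j ≤ q.val) : (q - (j : Fin n)).val = q.val - j := by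
  have hjn : j < n := lt_of_le_of_lt h q.isLt
  have hadd : (q - (j : Fin n)) + (j : Fin n) = q := by ring
  have hv := congrArg Fin.val hadd
  rw [Fin.val_add, Fin.val_natCast] at hv
  rw [Nat.mod_eq_of_lt hjn] at hv
  rcases Nat.lt_or_ge ((q - (j : Fin n)).val + j) n with hlt | hge
  · rw [Nat.mod_eq_of_lt hlt] at hv; omega
  · exfalso
    have hlt2 : (q - (j : Fin n)).val + j < 2 * n := by
      have := (q - (j : Fin n)).isLt; omega
    have : ((q - (j : Fin n)).val + j) % n = (q - (j : Fin n)).val + j - n := by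
      rw [Nat.mod_eq_sub_mod hge, Nat.mod_eq_of_lt (by omega)]
    rw [this] at hv
    have := q.isLt
    omega

/-- word repeated j times -/
def repeatW (u : List (Fin n → Fin n)) : ℕ → List (Fin n → Fin n)
  | 0 => []
  | j+1 => u ++ repeatW u j

theorem length_repeatW (u : List (Fin n → Fin n)) (j : ℕ) :
    (repeatW u j).length = j * u.length := by
  induction j with
  | zero => simp [repeatW]
  | succ j ih => simp [repeatW, ih]; ring

theorem good_repeatW {c : Fin n → Fin n} {u : List (Fin n → Fin n)} (hu : Good c u) (j : ℕ) :
    Good c (repeatW u j) := by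
  induction j with
  | zero => intro f hf; simp [repeatW] at hf
  | succ j ih => exact (hu.append ih)

/-- The master descent lemma: if one pass of `u` acts as `x ↦ b (x - 1)`,
then `j` passes send any `q ≠ 0` with `q.val ≤ j + 1` to `1`,
and any other `q ≠ 0` to `q - j`. -/
theorem master {u : List (Fin n → Fin n)} (hn : 2 ≤ n)
    (hu : ∀ x : Fin n, applyWord u x = cernyB n (x - 1)) (j : ℕ) :
    ∀ q : Fin n, q ≠ 0 →
      (q.val ≤ j + 1 → applyWord (repeatW u j) q = 1) ∧
      (j + 1 < q.val → applyWord (repeatW u j) q = q - (j : Fin n)) := by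
  induction j with
  | zero =>
    intro q hq
    constructor
    · intro hle
      have : q.val = 1 := by
        have : q.val ≠ 0 := fun h => hq (Fin.ext (by simp [h]))
        omega
      show q = 1
      apply Fin.ext
      rw [this, val_one' hn]
    · intro _
      show q = q - ((0:ℕ) : Fin n)
      simp
  | succ j ih =>
    intro q hq
    have hstep : applyWord (repeatW u (j+1)) q = applyWord (repeatW u j) (cernyB n (q - 1)) := by
      show applyWord (u ++ repeatW u j) q = _
      rw [applyWord_append, hu]
    by_cases hq1 : q = 1
    · subst hq1
      constructor
      · intro _
        rw [hstep]
        have : cernyB n ((1:Fin n) - 1) = 1 := by simp [cernyB]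
        rw [this]
        exact (ih 1 (one_ne_zero' hn)).1 (by rw [val_one' hn]; omega)
      · intro hgt
        rw [val_one' hn] at hgt; omega
    · -- q.val ≥ 2
      have hv2 : 2 ≤ q.val := by
        have h0 : q.val ≠ 0 := fun h => hq (Fin.ext (by simp [h]))
        have h1 : q.val ≠ 1 := fun h => hq1 (Fin.ext (by rw [h, val_one' hn]))
        omega
      have hsub1 : (q - 1).val = q.val - 1 := by
        have : ((1:ℕ) : Fin n) = (1 : Fin n) := by push_cast; rfl
        rw [← this, sub_nat_val q 1 (by omega)]
      have hne : q - 1 ≠ 0 := by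
        intro h
        have := congrArg Fin.val h
        rw [hsub1] at this
        simp at this; omega
      have hbfix : cernyB n (q - 1) = q - 1 := by
        unfold cernyB
        simp [hne]
      constructor
      · intro hle
        rw [hstep, hbfix]
        exact (ih (q-1) hne).1 (by omega)
      · intro hgt
        rw [hstep, hbfix]
        have := (ih (q-1) hne).2 (by omega)
        rw [this]
        show q - 1 - (j : Fin n) = q - ((j+1 : ℕ) : Fin n)
        push_cast
        ring

/-- The standard round. -/
def stdRound (n : ℕ) [NeZero n] : List (Fin n → Fin n) := Arep n (n-1) ++ [cernyB n]

theorem stdRound_spec (hn : 2 ≤ n) (x : Fin n) :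
    applyWord (stdRound n) x = cernyB n (x - 1) := by
  unfold stdRound
  rw [applyWord_append, apply_Arep]
  have : ((n-1 : ℕ) : Fin n) = -1 := by
    have : ((n-1 : ℕ) : Fin n) + 1 = ((n : ℕ) : Fin n) := by
      push_cast [Nat.cast_sub (by omega : 1 ≤ n)]
      ring
    rw [Fin.natCast_self] at this
    linear_combination this
  rw [this]
  show applyWord [cernyB n] (x + -1) = cernyB n (x - 1)
  simp [applyWord]
  ring_nf

theorem length_stdRound : (stdRound n).length = n := by
  have h := NeZero.pos n
  simp [stdRound, Arep]
  omega

theorem good_stdRound (c : Fin n → Fin n) : Good c (stdRound n) :=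
  (good_Arep c _).append (good_b c)

/-- The finisher: from any `q` with `q.val ≤ j+1`, `b` then `j` standard rounds give `1`. -/
def finisher (n : ℕ) [NeZero n] (j : ℕ) : List (Fin n → Fin n) :=
  cernyB n :: repeatW (stdRound n) j

theorem finisher_spec (hn : 2 ≤ n) (j : ℕ) (q : Fin n) (hq : q.val ≤ j + 1) :
    applyWord (finisher n j) q = 1 := by
  unfold finisher
  rw [applyWord_cons]
  apply (master hn (stdRound_spec hn) j _ (b_ne_zero hn q)).1
  have := b_val_le hn q
  omega

theorem length_finisher (j : ℕ) : (finisher n j).length = 1 + j * n := by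
  simp [finisher, length_repeatW, length_stdRound]
  ring

theorem good_finisher (c : Fin n → Fin n) (j : ℕ) : Good c (finisher n j) := by
  unfold finisher
  intro f hf
  rcases List.mem_cons.1 hf with h | h
  · exact Or.inr (Or.inl h)
  · exact good_repeatW (good_stdRound c) j f h

theorem cast_val_small (t : ℕ) (h : t < n) : ((t : ℕ) : Fin n).val = t := by
  rw [Fin.val_natCast]; exact Nat.mod_eq_of_lt h

theorem neg_one_cast (hn : 1 ≤ n) : ((n-1 : ℕ) : Fin n) = -1 := by
  have h : ((n-1 : ℕ) : Fin n) + 1 = ((n : ℕ) : Fin n) := by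
    push_cast [Nat.cast_sub (by omega : 1 ≤ n)]
    ring
  rw [Fin.natCast_self] at h
  linear_combination h

theorem neg_two_cast (hn : 2 ≤ n) : ((n-2 : ℕ) : Fin n) = -2 := by
  have h : ((n-2 : ℕ) : Fin n) + 2 = ((n : ℕ) : Fin n) := by
    push_cast [Nat.cast_sub (by omega : 2 ≤ n)]
    ring
  rw [Fin.natCast_self] at h
  linear_combination h

theorem budget_lt (hn : 5 ≤ n) {L : ℕ} (h : L ≤ n*n - 2*n) : L < (n-1)^2 := by
  obtain ⟨k, rfl⟩ : ∃ k, n = k + 1 := ⟨n-1, by omega⟩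
  have h2 : (k+1-1)^2 = k*k := by simp [pow_two]
  rw [h2]
  have h3 : (k+1)*(k+1) = k*k + 2*k + 1 := by ring
  rw [h3] at h
  have h4 : 16 ≤ k*k := Nat.mul_le_mul (show 4 ≤ k by omega) (show 4 ≤ k by omega)
  omega

theorem val_lt_of_ne_two_top (hn : 3 ≤ n) (q : Fin n)
    (h1 : q ≠ -2) (h2 : q ≠ -1) : q.val < n - 2 := by
  rw [← neg_two_cast (by omega)] at h1
  rw [← neg_one_cast (by omega)] at h2
  by_contra hc
  push_neg at hc
  have hq := q.isLt
  rcases (by omega : q.val = n - 2 ∨ q.val = n - 1) with h | h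
  · exact h1 (by apply Fin.ext; rw [cast_val_small _ (by omega)]; exact h)
  · exact h2 (by apply Fin.ext; rw [cast_val_small _ (by omega)]; exact h)

theorem assemble (c : Fin n → Fin n) (w : List (Fin n → Fin n)) (hg : Good c w)
    (qs : Fin n) (hsync : ∀ q, applyWord w q = qs) (hlen : w.length < (n-1)^2) :
    ShortSync n c ((n-1)^2) := ⟨w, hg, ⟨qs, hsync⟩, hlen⟩

/-- Case A: some `m ≠ 0` is not in the image of `c`. -/
theorem caseA (hn : 5 ≤ n) (c : Fin n → Fin n) (m : Fin n) (hm : m ≠ 0)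
    (hmiss : ∀ x, c x ≠ m) : ShortSync n c ((n-1)^2) := by
  have hn2 : 2 ≤ n := by omega
  set w := [c] ++ Arep n (n-1-m.val) ++ finisher n (n-3) with hw
  apply assemble c w ((good_c c).append ((good_Arep c _).append (good_finisher c _))) 1
  · intro q
    rw [hw, applyWord_append, applyWord_append, apply_Arep]
    set x : Fin n := applyWord [c] q with hx
    have hxm : x ≠ m := hmiss q
    apply finisher_spec hn2
    have hcast : ((n-1-m.val : ℕ) : Fin n) = -1 - (m.val : Fin n) := by
      rw [Nat.cast_sub (by have := m.isLt; omega : m.val ≤ n-1), neg_one_cast (by omega)]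
    have hne : x + ((n-1-m.val : ℕ) : Fin n) ≠ -1 := by
      rw [hcast, Fin.cast_val_eq_self]
      intro hcontra
      exact hxm (by linear_combination hcontra)
    have hne2 : (x + ((n-1-m.val : ℕ) : Fin n)).val ≠ n - 1 := by
      intro hv
      apply hne
      rw [← neg_one_cast (by omega : 1 ≤ n)]
      apply Fin.ext; rw [cast_val_small _ (by omega)]; exact hv
    have hlt := (x + ((n-1-m.val : ℕ) : Fin n)).isLt
    omega
  · apply budget_lt hn
    have hmv : 1 ≤ m.val := by
      rcases Nat.eq_zero_or_pos m.val with h | h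
      · exact absurd (Fin.ext (by simp [h])) hm
      · exact h
    have hlen : w.length = 1 + (n-1-m.val) + (1 + (n-3)*n) := by
      simp [hw, Arep, length_finisher]
      ring
    have h3 : (n-3)*n = n*n - 3*n := by rw [Nat.sub_mul]
    have hP : 5*n ≤ n*n := Nat.mul_le_mul_right n hn
    rw [hlen, h3]
    omega

/-- E1: image misses 0, and 1 has unique preimage j. -/
theorem caseE1 (hn : 5 ≤ n) (c : Fin n → Fin n) (j : Fin n)
    (h0 : ∀ x, c x ≠ 0) (h1 : ∀ x, c x = 1 → x = j) : ShortSync n c ((n-1)^2) := by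
  have hn2 : 2 ≤ n := by omega
  set w := [cernyB n] ++ Arep n j.val ++ [c] ++ Arep n (n-2) ++ finisher n (n-4) with hw
  apply assemble c w
    (((((good_b c).append (good_Arep c _)).append (good_c c)).append (good_Arep c _)).append
      (good_finisher c _)) 1
  · intro q
    rw [hw]
    repeat rw [applyWord_append]
    rw [apply_Arep, apply_Arep]
    set x : Fin n := applyWord [cernyB n] q + (j.val : Fin n) with hxdef
    have hx : x ≠ j := by
      rw [hxdef, Fin.cast_val_eq_self]
      intro hcontra
      have hz : applyWord [cernyB n] q = 0 := by linear_combination hcontra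
      exact b_ne_zero hn2 q hz
    show applyWord (finisher n (n-4)) (c x + ((n-2:ℕ) : Fin n)) = 1
    have hc0 : c x ≠ 0 := h0 x
    have hc1 : c x ≠ 1 := fun h => hx (h1 x h)
    apply finisher_spec hn2
    rw [neg_two_cast hn2]
    have hne1 : c x + -2 ≠ -2 := fun h => hc0 (by linear_combination h)
    have hne2 : c x + -2 ≠ -1 := fun h => hc1 (by linear_combination h)
    have := val_lt_of_ne_two_top (by omega) _ hne1 hne2
    omega
  · apply budget_lt hn
    have hlen : w.length = 1 + j.val + 1 + (n-2) + (1 + (n-4)*n) := by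
      simp [hw, Arep, length_finisher]
      ring
    have h4 : (n-4)*n = n*n - 4*n := by rw [Nat.sub_mul]
    have hP : 5*n ≤ n*n := Nat.mul_le_mul_right n hn
    have := j.isLt
    rw [hlen, h4]
    omega

/-- E2: image misses 0, and -1 has unique preimage j with j.val ≤ n-2. -/
theorem caseE2 (hn : 5 ≤ n) (c : Fin n → Fin n) (j : Fin n) (hj : j.val ≤ n-2)
    (h0 : ∀ x, c x ≠ 0) (h1 : ∀ x, c x = -1 → x = j) : ShortSync n c ((n-1)^2) := by
  have hn2 : 2 ≤ n := by omega
  set w := [cernyB n] ++ Arep n j.val ++ [c] ++ Arep n (n-1) ++ finisher n (n-4) with hw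
  apply assemble c w
    (((((good_b c).append (good_Arep c _)).append (good_c c)).append (good_Arep c _)).append
      (good_finisher c _)) 1
  · intro q
    rw [hw]
    repeat rw [applyWord_append]
    rw [apply_Arep, apply_Arep]
    set x : Fin n := applyWord [cernyB n] q + (j.val : Fin n) with hxdef
    have hx : x ≠ j := by
      rw [hxdef, Fin.cast_val_eq_self]
      intro hcontra
      have hz : applyWord [cernyB n] q = 0 := by linear_combination hcontra
      exact b_ne_zero hn2 q hz
    show applyWord (finisher n (n-4)) (c x + ((n-1:ℕ) : Fin n)) = 1
    have hc0 : c x ≠ 0 := h0 x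
    have hc1 : c x ≠ -1 := fun h => hx (h1 x h)
    apply finisher_spec hn2
    rw [neg_one_cast (by omega : 1 ≤ n)]
    have hne1 : c x + -1 ≠ -2 := fun h => hc1 (by linear_combination h)
    have hne2 : c x + -1 ≠ -1 := fun h => hc0 (by linear_combination h)
    have := val_lt_of_ne_two_top (by omega) _ hne1 hne2
    omega
  · apply budget_lt hn
    have hlen : w.length = 1 + j.val + 1 + (n-1) + (1 + (n-4)*n) := by
      simp [hw, Arep, length_finisher]
      ring
    have h4 : (n-4)*n = n*n - 4*n := by rw [Nat.sub_mul]
    have hP : 5*n ≤ n*n := Nat.mul_le_mul_right n hn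
    rw [hlen, h4]
    omega

/-- E4: `c` merges the adjacent pair `{p, p+1}` with `p ≠ 0`. -/
theorem caseE4 (hn : 5 ≤ n) (c : Fin n → Fin n) (p : Fin n) (hp : p ≠ 0)
    (hmerge : c p = c (p+1)) : ShortSync n c ((n-1)^2) := by
  have hn2 : 2 ≤ n := by omega
  set w := [cernyB n] ++ repeatW (stdRound n) (n-3) ++ Arep n (p.val - 1) ++ [c] with hw
  apply assemble c w
    ((((good_b c).append (good_repeatW (good_stdRound c) _)).append (good_Arep c _)).append
      (good_c c)) (c p)
  · intro q
    rw [hw]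
    repeat rw [applyWord_append]
    set x : Fin n := applyWord [cernyB n] q with hxdef
    have hx0 : x ≠ 0 := b_ne_zero hn2 q
    have hxlt : x.val ≤ n - 1 := by have := x.isLt; omega
    have hpv : 1 ≤ p.val := by
      rcases Nat.eq_zero_or_pos p.val with h | h
      · exact absurd (Fin.ext (by simp [h])) hp
      · exact h
    have hcast : ((p.val - 1 : ℕ) : Fin n) = p - 1 := by
      rw [Nat.cast_sub (by omega : 1 ≤ p.val), Fin.cast_val_eq_self]
      push_cast
      ring
    have hm := master hn2 (stdRound_spec hn2) (n-3) x hx0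
    rcases Nat.lt_or_ge (n-3+1) x.val with hgt | hge
    · rw [hm.2 hgt, apply_Arep, hcast]
      have hx1 : x = -1 := by
        have := x.isLt
        have hv : x.val = n - 1 := by omega
        rw [← neg_one_cast (by omega : 1 ≤ n)]
        apply Fin.ext; rw [cast_val_small _ (by omega)]; exact hv
      have hcast2 : ((n-3 : ℕ) : Fin n) = -3 := by
        have h : ((n-3 : ℕ) : Fin n) + 3 = ((n : ℕ) : Fin n) := by
          push_cast [Nat.cast_sub (by omega : 3 ≤ n)]
          ring
        rw [Fin.natCast_self] at h
        linear_combination h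
      rw [hx1, hcast2]
      show c (-1 - -3 + (p - 1)) = c p
      have : -1 - -3 + (p - 1) = p + 1 := by ring
      rw [this, hmerge]
    · rw [hm.1 hge, apply_Arep, hcast]
      show c (1 + (p - 1)) = c p
      congr 1
      ring
  · apply budget_lt hn
    have hlen : w.length = 1 + (n-3)*n + (p.val - 1) + 1 := by
      simp [hw, Arep, length_repeatW, length_stdRound]
      ring
    have h3 : (n-3)*n = n*n - 3*n := by rw [Nat.sub_mul]
    have hP : 5*n ≤ n*n := Nat.mul_le_mul_right n hn
    have := p.isLt
    rw [hlen, h3]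
    omega

/-- PC: `c` merges a non-adjacent pair `{P, Q'}` with `(Q'-P).val ∈ [2, n-3]`. -/
theorem casePC (hn : 5 ≤ n) (c : Fin n → Fin n) (P Q' : Fin n)
    (hd2 : 2 ≤ (Q' - P).val) (hd3 : (Q' - P).val ≤ n - 3)
    (hmerge : c P = c Q') : ShortSync n c ((n-1)^2) := by
  have hn2 : 2 ≤ n := by omega
  set dv := (Q' - P).val with hdv
  set ρ := (Q' - 1).val with hρ
  set w := [cernyB n] ++ repeatW (stdRound n) (n-2-dv) ++ Arep n (n-2) ++ [cernyB n] ++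
      repeatW (stdRound n) (dv-2) ++ Arep n ρ ++ [c] with hw
  apply assemble c w
    (((((((good_b c).append (good_repeatW (good_stdRound c) _)).append
      (good_Arep c _)).append (good_b c)).append
      (good_repeatW (good_stdRound c) _)).append (good_Arep c _)).append (good_c c)) (c P)
  · intro q
    rw [hw]
    repeat rw [applyWord_append]
    set x : Fin n := applyWord [cernyB n] q with hxdef
    have hx0 : x ≠ 0 := b_ne_zero hn2 q
    have hxlt : x.val ≤ n - 1 := by have := x.isLt; omega
    have hm := master hn2 (stdRound_spec hn2) (n-2-dv) x hx0
    -- after first descent, y has val in [1, dv+1]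
    have hy : ∃ y : Fin n, applyWord (repeatW (stdRound n) (n-2-dv)) x = y ∧
        1 ≤ y.val ∧ y.val ≤ dv + 1 := by
      rcases Nat.lt_or_ge (n-2-dv+1) x.val with hgt | hge
      · refine ⟨x - ((n-2-dv : ℕ) : Fin n), hm.2 hgt, ?_⟩
        rw [sub_nat_val x _ (by omega)]
        omega
      · exact ⟨1, hm.1 hge, by rw [val_one' hn2]; omega⟩
    obtain ⟨y, hyeq, hy1, hy2⟩ := hy
    rw [hyeq, apply_Arep (n-2) y]
    have hcast2 : ((n-2 : ℕ) : Fin n) = -2 := neg_two_cast hn2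
    rw [hcast2]
    -- z = y - 2 ; then b ; then second descent
    have key : ∀ z : Fin n, z ≠ 0 → z.val ≤ dv - 1 →
        applyWord (repeatW (stdRound n) (dv-2)) z = 1 := by
      intro z hz hzval
      exact (master hn2 (stdRound_spec hn2) (dv-2) z hz).1 (by omega)
    have hfin : applyWord (repeatW (stdRound n) (dv-2)) (applyWord [cernyB n] (y + -2))
        = 1 ∨
        applyWord (repeatW (stdRound n) (dv-2)) (applyWord [cernyB n] (y + -2))
        = -1 - ((dv-2 : ℕ) : Fin n) := by
      rcases Nat.lt_or_ge y.val 2 with h1 | h2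
      · -- y = 1, z = -1
        have hyone : y = 1 := Fin.ext (by rw [val_one' hn2]; omega)
        right
        have hz : y + -2 = -1 := by rw [hyone]; ring
        rw [hz]
        have hne : (-1 : Fin n) ≠ 0 := by
          rw [← neg_one_cast (by omega : 1 ≤ n)]
          intro hcontra
          have := congrArg Fin.val hcontra
          rw [cast_val_small _ (by omega)] at this
          simp at this; omega
        have hbfix : applyWord [cernyB n] (-1 : Fin n) = -1 := by
          show cernyB n (-1) = -1
          unfold cernyB; simp [hne]
        rw [hbfix]
        have hval : (-1 : Fin n).val = n - 1 := by
          rw [← neg_one_cast (by omega : 1 ≤ n), cast_val_small _ (by omega)]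
        apply (master hn2 (stdRound_spec hn2) (dv-2) _ hne).2
        omega
      · -- y.val ≥ 2 : z := y - 2 with val = y.val - 2 ≤ dv - 1
        left
        have hzcast : y + -2 = y - ((2:ℕ) : Fin n) := by push_cast; ring
        have hzval : (y + -2).val = y.val - 2 := by
          rw [hzcast, sub_nat_val y 2 h2]
        by_cases hz0 : y + -2 = 0
        · rw [hz0]
          have : applyWord [cernyB n] (0 : Fin n) = 1 := by
            show cernyB n 0 = 1
            unfold cernyB; simp
          rw [this]
          exact key 1 (one_ne_zero' hn2) (by rw [val_one' hn2]; omega)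
        · have hbfix : applyWord [cernyB n] (y + -2) = y + -2 := by
            show cernyB n (y + -2) = y + -2
            unfold cernyB; simp [hz0]
          rw [hbfix]
          exact key _ hz0 (by omega)
    rcases hfin with h | h
    · rw [h, apply_Arep ρ 1]
      show c (1 + (ρ : Fin n)) = c P
      rw [hρ, Fin.cast_val_eq_self]
      have : 1 + (Q' - 1) = Q' := by ring
      rw [this, hmerge]
    · rw [h, apply_Arep ρ (-1 - ((dv-2 : ℕ) : Fin n))]
      show c (-1 - ((dv-2 : ℕ) : Fin n) + (ρ : Fin n)) = c P
      rw [hρ, Fin.cast_val_eq_self]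
      have hc3 : ((dv-2 : ℕ) : Fin n) = (Q' - P) - 2 := by
        rw [Nat.cast_sub (by omega : 2 ≤ dv), hdv, Fin.cast_val_eq_self]
        push_cast; ring
      rw [hc3]
      have : -1 - (Q' - P - 2) + (Q' - 1) = P := by ring
      rw [this]
  · apply budget_lt hn
    have hρlt : ρ ≤ n - 1 := by have := (Q' - 1).isLt; omega
    have hlen : w.length = 1 + (n-2-dv)*n + (n-2) + 1 + (dv-2)*n + ρ + 1 := by
      simp [hw, Arep, length_repeatW, length_stdRound]
      ring
    have hsum : (n-2-dv)*n + (dv-2)*n = (n-4)*n := by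
      rw [← Nat.add_mul]
      congr 1
      omega
    have h4 : (n-4)*n = n*n - 4*n := by rw [Nat.sub_mul]
    have hP5 : 5*n ≤ n*n := Nat.mul_le_mul_right n hn
    rw [hlen]
    omega

set_option maxHeartbeats 1000000 in
/-- R1: a non-adjacent pair `{α, β}` is the preimage set of the adjacent pair
`{w, w+1}` with `w.val ∈ [1, n-2]`. -/
theorem caseR1 (hn : 5 ≤ n) (c : Fin n → Fin n) (α β wit : Fin n)
    (hab : α.val < β.val) (ht2 : 2 ≤ β.val - α.val) (htn : β.val - α.val ≤ n-2)
    (hw1 : 1 ≤ wit.val) (hw2 : wit.val ≤ n-2)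
    (havoid : ∀ x, x ≠ α → x ≠ β → c x ≠ wit ∧ c x ≠ wit + 1) :
    ShortSync n c ((n-1)^2) := by
  have hn2 : 2 ≤ n := by omega
  set t := β.val - α.val with htdef
  set s := α.val with hsdef
  set w := [cernyB n] ++ Arep n t ++ [cernyB n] ++ Arep n s ++ [c] ++
      Arep n (n-2-wit.val) ++ finisher n (n-4) with hw
  apply assemble c w
    (((((((good_b c).append (good_Arep c _)).append (good_b c)).append
      (good_Arep c _)).append (good_c c)).append
      (good_Arep c _)).append (good_finisher c _)) 1
  · intro q
    rw [hw]
    repeat rw [applyWord_append]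
    generalize hx1 : applyWord [cernyB n] q = x1
    have hx10 : x1 ≠ 0 := hx1 ▸ b_ne_zero hn2 q
    rw [apply_Arep t x1]
    generalize hx2 : x1 + (t : Fin n) = x2
    have hx2t : x2 ≠ (t : Fin n) := by
      rw [← hx2]; intro hcontra
      exact hx10 (by linear_combination hcontra)
    have htval : ((t:ℕ) : Fin n).val = t := cast_val_small t (by omega)
    generalize hx3 : applyWord [cernyB n] x2 = x3
    have hb2 : x3 ≠ 0 ∧ x3 ≠ (t : Fin n) := by
      rw [← hx3]
      show cernyB n x2 ≠ 0 ∧ cernyB n x2 ≠ (t : Fin n)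
      constructor
      · exact b_ne_zero hn2 x2
      · unfold cernyB
        split
        · intro hcontra
          have := congrArg Fin.val hcontra
          rw [val_one' hn2, htval] at this
          omega
        · exact hx2t
    rw [apply_Arep s x3]
    generalize hx4 : x3 + (s : Fin n) = x4
    have hsα : ((s:ℕ) : Fin n) = α := by rw [hsdef, Fin.cast_val_eq_self]
    have hx4α : x4 ≠ α := by
      rw [← hx4, hsα]; intro hcontra
      exact hb2.1 (by linear_combination hcontra)
    have hx4β : x4 ≠ β := by
      rw [← hx4]; intro hcontra
      apply hb2.2
      have hβc : β = ((s + t : ℕ) : Fin n) := by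
        have hst : s + t = β.val := by omega
        rw [hst, Fin.cast_val_eq_self]
      rw [hβc] at hcontra
      push_cast at hcontra
      rw [hsα] at hcontra
      linear_combination hcontra
    have hcav := havoid x4 hx4α hx4β
    have hx4c : applyWord [c] x4 = c x4 := rfl
    rw [hx4c, apply_Arep (n-2-wit.val) (c x4)]
    apply finisher_spec hn2
    have hcastw : ((n-2-wit.val : ℕ) : Fin n) = -2 - wit := by
      rw [Nat.cast_sub (by omega : wit.val ≤ n-2), neg_two_cast hn2, Fin.cast_val_eq_self]
    rw [hcastw]
    have hne1 : c x4 + (-2 - wit) ≠ -2 := by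
      intro h; exact hcav.1 (by linear_combination h)
    have hne2 : c x4 + (-2 - wit) ≠ -1 := by
      intro h; exact hcav.2 (by linear_combination h)
    have := val_lt_of_ne_two_top (by omega) _ hne1 hne2
    omega
  · apply budget_lt hn
    have hβ := β.isLt
    have hlen : w.length = 1 + t + 1 + s + 1 + (n-2-wit.val) + (1 + (n-4)*n) := by
      simp [hw, Arep, length_finisher]
      ring
    have h4 : (n-4)*n = n*n - 4*n := by rw [Nat.sub_mul]
    have hP5 : 5*n ≤ n*n := Nat.mul_le_mul_right n hn
    rw [hlen, h4]
    omega

/-- ROT: `c` is rotation by `r`, `r.val ≥ 2`. -/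
theorem caseROT (hn : 5 ≤ n) (c : Fin n → Fin n) (r : Fin n) (hrv : 2 ≤ r.val)
    (hc : ∀ x, c x = x + r) : ShortSync n c ((n-1)^2) := by
  have hn2 : 2 ≤ n := by omega
  set u := Arep n (n-1-r.val) ++ [c, cernyB n] with hu
  have huspec : ∀ x : Fin n, applyWord u x = cernyB n (x - 1) := by
    intro x
    rw [hu, applyWord_append, apply_Arep]
    show cernyB n (c (x + ((n-1-r.val : ℕ) : Fin n))) = cernyB n (x - 1)
    rw [hc]
    congr 1
    rw [Nat.cast_sub (by have := r.isLt; omega : r.val ≤ n-1),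
      neg_one_cast (by omega : 1 ≤ n), Fin.cast_val_eq_self]
    ring
  set w := [cernyB n] ++ repeatW u (n-2) with hw
  have hugood : Good c u := by
    refine (good_Arep c _).append ?_
    intro f hf
    rcases List.mem_cons.1 hf with h | h
    · exact Or.inr (Or.inr h)
    · simp only [List.mem_singleton] at h
      exact Or.inr (Or.inl h)
  apply assemble c w ((good_b c).append (good_repeatW hugood _)) 1
  · intro q
    rw [hw, applyWord_append]
    set x : Fin n := applyWord [cernyB n] q with hx
    have hx0 : x ≠ 0 := b_ne_zero hn2 q
    exact (master hn2 huspec (n-2) x hx0).1 (by have := x.isLt; omega)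
  · apply budget_lt hn
    have hlen : w.length = 1 + (n-2) * ((n-1-r.val) + 2) := by
      simp [hw, hu, Arep, length_repeatW]
      omega
    have h1 : (n-1-r.val) + 2 ≤ n - 1 := by have := r.isLt; omega
    have h2 : (n-2) * ((n-1-r.val) + 2) ≤ (n-2)*(n-1) := Nat.mul_le_mul_left _ h1
    have h3 : (n-2)*(n-1) + 3*n = n*n + 2 := by
      obtain ⟨k, rfl⟩ : ∃ k, n = k + 5 := ⟨n-5, by omega⟩
      have e1 : k+5-2 = k+3 := by omega
      have e2 : k+5-1 = k+4 := by omega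
      rw [e1, e2]; ring
    have hP5 : 5*n ≤ n*n := Nat.mul_le_mul_right n hn
    rw [hlen]
    omega

/-- REFL: `c` is the reflection `x ↦ e - x`. -/
theorem caseREFL (hn : 5 ≤ n) (c : Fin n → Fin n) (e : Fin n)
    (hc : ∀ x, c x = e - x) : ShortSync n c ((n-1)^2) := by
  have hn2 : 2 ≤ n := by omega
  set u := [c, cernyA n, c, cernyB n] with hu
  have huspec : ∀ x : Fin n, applyWord u x = cernyB n (x - 1) := by
    intro x
    show cernyB n (c (cernyA n (c x))) = cernyB n (x - 1)
    rw [hc, hc]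
    show cernyB n (e - (cernyA n (e - x))) = cernyB n (x - 1)
    unfold cernyA
    congr 1
    ring
  set w := [cernyB n] ++ repeatW u (n-2) with hw
  have hugood : Good c u := by
    intro f hf
    simp only [hu, List.mem_cons, List.mem_singleton] at hf
    rcases hf with h | h | h | h
    · exact Or.inr (Or.inr h)
    · exact Or.inl h
    · exact Or.inr (Or.inr h)
    · rcases h with h | h
      · exact Or.inr (Or.inl h)
      · simp at h
  apply assemble c w ((good_b c).append (good_repeatW hugood _)) 1
  · intro q
    rw [hw, applyWord_append]
    set x : Fin n := applyWord [cernyB n] q with hx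
    have hx0 : x ≠ 0 := b_ne_zero hn2 q
    exact (master hn2 huspec (n-2) x hx0).1 (by have := x.isLt; omega)
  · apply budget_lt hn
    have hlen : w.length = 1 + (n-2) * 4 := by
      simp [hw, hu, length_repeatW]
      omega
    rcases Nat.lt_or_ge n 6 with h6 | h6
    · have hn5 : n = 5 := by omega
      subst hn5
      rw [hlen]
      norm_num
    · have hP6 : 6*n ≤ n*n := Nat.mul_le_mul_right n h6
      rw [hlen]
      omega

theorem neg_one_ne_zero' (hn : 2 ≤ n) : (-1 : Fin n) ≠ 0 := by
  rw [← neg_one_cast (by omega : 1 ≤ n)]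
  intro h
  have := congrArg Fin.val h
  rw [cast_val_small _ (by omega)] at this
  simp at this
  omega

theorem neg_one_ne_one' (hn : 3 ≤ n) : (-1 : Fin n) ≠ 1 := by
  rw [← neg_one_cast (by omega : 1 ≤ n)]
  intro h
  have := congrArg Fin.val h
  rw [cast_val_small _ (by omega), val_one' (by omega)] at this
  omega

theorem val_add_one_of_lt {A : Fin n} (h : A.val + 1 < n) : (A + 1).val = A.val + 1 := by
  have hn2 : 2 ≤ n := by omega
  have := Fin.val_add A 1
  rw [val_one' hn2] at this
  rw [this, Nat.mod_eq_of_lt h]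

theorem val_neg_of_ne_zero {x : Fin n} (hx : x ≠ 0) : (-x).val = n - x.val := by
  have h1 : x + (-x) = 0 := by ring
  have h2 := congrArg Fin.val h1
  rw [Fin.val_add] at h2
  have h3 : (0 : Fin n).val = 0 := rfl
  rw [h3] at h2
  have hxv : x.val ≠ 0 := fun h => hx (Fin.ext (by simp [h]))
  have hnegv : (-x).val < n := (-x).isLt
  have hxlt := x.isLt
  rcases Nat.lt_or_ge (x.val + (-x).val) n with hlt | hge
  · rw [Nat.mod_eq_of_lt hlt] at h2
    omega
  · have : (x.val + (-x).val) % n = x.val + (-x).val - n := by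
      rw [Nat.mod_eq_sub_mod hge, Nat.mod_eq_of_lt (by omega)]
    rw [this] at h2
    omega

/-- Adjacent walk has constant step. -/
theorem walk_const (τ : ℕ → Fin n) (m : ℕ)
    (hinj : ∀ i, i ≤ m → ∀ j, j ≤ m → τ i = τ j → i = j)
    (hadj : ∀ j, j + 1 ≤ m → τ (j+1) - τ j = 1 ∨ τ (j+1) - τ j = -1) :
    ∀ j, j + 1 ≤ m → τ (j+1) - τ j = τ 1 - τ 0 := by
  intro j
  induction j with
  | zero => intro _; rfl
  | succ j ih =>
    intro h
    have h1 : j + 1 ≤ m := by omega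
    have e1 := ih h1
    have absurd_mix : τ (j+1+1) - τ (j+1) = -(τ (j+1) - τ j) → False := by
      intro hmix
      have heq : τ (j+1+1) = τ j := by linear_combination hmix
      have := hinj (j+1+1) (by omega) j (by omega) heq
      omega
    have e2 : τ (j+1+1) - τ (j+1) = τ (j+1) - τ j := by
      rcases hadj (j+1) h with h2 | h2 <;> rcases hadj j h1 with h3 | h3
      · rw [h2, h3]
      · exact (absurd_mix (by rw [h2, h3]; try ring)).elim
      · exact (absurd_mix (by rw [h2, h3]; try ring)).elim
      · rw [h2, h3]
    rw [e2]
    exact e1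

theorem walk_formula (τ : ℕ → Fin n) (m : ℕ)
    (hconst : ∀ j, j + 1 ≤ m → τ (j+1) - τ j = τ 1 - τ 0) :
    ∀ j, j ≤ m → τ j = τ 0 + (j : Fin n) * (τ 1 - τ 0) := by
  intro j
  induction j with
  | zero => intro _; simp
  | succ j ih =>
    intro h
    have e1 := hconst j (by omega)
    have e2 := ih (by omega)
    have : τ (j+1) = τ j + (τ 1 - τ 0) := by linear_combination e1
    rw [this, e2]
    push_cast
    ring

/-- R1 wrapper: unordered non-adjacent pair. -/
theorem caseR1' (hn : 5 ≤ n) (c : Fin n → Fin n) (wit : Fin n)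
    (hw1 : 1 ≤ wit.val) (hw2 : wit.val ≤ n-2) (A B : Fin n) (hAB : A ≠ B)
    (hd1 : B - A ≠ 1) (hd2 : A - B ≠ 1)
    (havoid : ∀ x, x ≠ A → x ≠ B → c x ≠ wit ∧ c x ≠ wit + 1) :
    ShortSync n c ((n-1)^2) := by
  have hn2 : 2 ≤ n := by omega
  have key : ∀ X Y : Fin n, X.val < Y.val → Y - X ≠ 1 → X - Y ≠ 1 →
      2 ≤ Y.val - X.val ∧ Y.val - X.val ≤ n - 2 := by
    intro X Y hlt hD1 hD2
    have hYlt := Y.isLt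
    constructor
    · by_contra hcon
      push_neg at hcon
      have h1 : Y.val = X.val + 1 := by omega
      apply hD1
      have : Y = X + 1 := Fin.ext (by rw [val_add_one_of_lt (by omega)]; omega)
      rw [this]; ring
    · by_contra hcon
      push_neg at hcon
      have h1 : Y.val = n - 1 ∧ X.val = 0 := by omega
      apply hD2
      have hX : X = 0 := Fin.ext (by simp [h1.2])
      have hY : Y = -1 := by
        rw [← neg_one_cast (by omega : 1 ≤ n)]
        exact Fin.ext (by rw [cast_val_small _ (by omega)]; exact h1.1)
      rw [hX, hY]; ring
  rcases lt_trichotomy A.val B.val with hlt | heq | hlt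
  · obtain ⟨k1, k2⟩ := key A B hlt hd1 hd2
    exact caseR1 hn c A B wit hlt k1 k2 hw1 hw2 havoid
  · exact absurd (Fin.ext heq) hAB
  · obtain ⟨k1, k2⟩ := key B A hlt hd2 hd1
    exact caseR1 hn c B A wit hlt k1 k2 hw1 hw2
      (fun x h1 h2 => havoid x h2 h1)

/-- The permutation case. -/
theorem casePerm (hn : 5 ≤ n) (c : Fin n → Fin n) (hinj : Function.Injective c)
    (hca : c ≠ cernyA n) (hcid : c ≠ id) : ShortSync n c ((n-1)^2) := by
  have hn2 : 2 ≤ n := by omega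
  have hsurj : Function.Surjective c := Finite.injective_iff_surjective.1 hinj
  set σ := Function.invFun c with hσdef
  have hcσ : ∀ w, c (σ w) = w := fun w => Function.invFun_eq (hsurj w)
  have hσinj : ∀ w w', σ w = σ w' → w = w' := by
    intro w w' h
    rw [← hcσ w, ← hcσ w', h]
  have huniq : ∀ w x, c x = w → x = σ w := by
    intro w x h
    apply hinj
    rw [hcσ, h]
  by_cases hbroken : ∃ w : Fin n, 1 ≤ w.val ∧ w.val ≤ n-2 ∧
      σ (w+1) - σ w ≠ 1 ∧ σ w - σ (w+1) ≠ 1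
  · obtain ⟨w, hw1, hw2, hd1, hd2⟩ := hbroken
    have hAB : σ w ≠ σ (w+1) := by
      intro h
      have := hσinj _ _ h
      have h2 : (1 : Fin n) = 0 := by linear_combination -this
      exact one_ne_zero' hn2 h2
    apply caseR1' hn c w hw1 hw2 (σ w) (σ (w+1)) hAB hd1 hd2
    intro x h1 h2
    constructor
    · intro hc; exact h1 (huniq w x hc)
    · intro hc; exact h2 (huniq (w+1) x hc)
  · push_neg at hbroken
    set τ : ℕ → Fin n := fun j => σ ((1 + j : ℕ) : Fin n) with hτ
    have hτeval : ∀ j, τ j = σ ((1 + j : ℕ) : Fin n) := fun j => rfl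
    have hτinj : ∀ i, i ≤ n-2 → ∀ j, j ≤ n-2 → τ i = τ j → i = j := by
      intro i hi j hj h
      have := hσinj _ _ h
      have hvi := congrArg Fin.val this
      rw [cast_val_small _ (by omega), cast_val_small _ (by omega)] at hvi
      omega
    have hτadj : ∀ j, j + 1 ≤ n-2 → τ (j+1) - τ j = 1 ∨ τ (j+1) - τ j = -1 := by
      intro j hj
      have hcast : ((1 + (j+1) : ℕ) : Fin n) = ((1 + j : ℕ) : Fin n) + 1 := by
        push_cast; ring
      have hval1 : ((1 + j : ℕ) : Fin n).val = 1 + j := cast_val_small _ (by omega)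
      have hb := hbroken ((1 + j : ℕ) : Fin n) (by omega) (by omega)
      rw [hτ]
      simp only []
      rw [hcast]
      rcases Classical.em (σ (((1 + j : ℕ) : Fin n) + 1) - σ ((1 + j : ℕ) : Fin n) = 1) with
        h | h
      · exact Or.inl h
      · right
        have := hb h
        linear_combination -this
    have hform := walk_formula τ (n-2) (walk_const τ (n-2) hτinj hτadj)
    have hε := hτadj 0 (by omega)
    norm_num at hε
    have hτ0 : τ 0 = σ 1 := by
      rw [hτeval 0]; norm_num
    set ε := τ 1 - τ 0 with hεdef
    have hform' : ∀ w : Fin n, w ≠ 0 → σ w = σ 1 + (w - 1) * ε := by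
      intro w hw
      have hwv : 1 ≤ w.val := by
        rcases Nat.eq_zero_or_pos w.val with h | h
        · exact absurd (Fin.ext (by simp [h])) hw
        · exact h
      have hj : w.val - 1 ≤ n - 2 := by have := w.isLt; omega
      have hf := hform (w.val - 1) hj
      rw [hτeval (w.val - 1)] at hf
      have e1 : 1 + (w.val - 1) = w.val := by omega
      rw [e1, Fin.cast_val_eq_self] at hf
      have e2 : ((w.val - 1 : ℕ) : Fin n) = w - 1 := by
        rw [Nat.cast_sub hwv, Fin.cast_val_eq_self]
        norm_num
      rw [e2, hτ0] at hf
      exact hf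
    rcases hε with hε | hε
    · -- rotation
      have hστ : ∀ w : Fin n, w ≠ 0 → σ w = σ 1 + (w - 1) := by
        intro w hw
        have := hform' w hw
        rw [hε] at this
        rw [this]; ring
      have hσ0 : σ 0 = σ 1 - 1 := by
        by_cases h0 : σ 0 - σ 1 + 1 = 0
        · linear_combination h0
        · exfalso
          have := hστ (σ 0 - σ 1 + 1) h0
          have h2 : σ (σ 0 - σ 1 + 1) = σ 0 := by rw [this]; ring
          have := hσinj _ _ h2
          exact h0 (by linear_combination this)
      have hcform : ∀ y, c y = y + (1 - σ 1) := by
        intro y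
        have hy := huniq (c y) y rfl
        by_cases h0 : c y = 0
        · rw [h0] at hy ⊢
          rw [hσ0] at hy
          linear_combination -hy
        · have := hστ (c y) h0
          rw [this] at hy
          linear_combination -hy
      set r := 1 - σ 1 with hr
      have hr0 : r ≠ 0 := by
        intro h
        apply hcid
        funext y
        rw [hcform y, h]
        simp
      have hr1 : r ≠ 1 := by
        intro h
        apply hca
        funext y
        rw [hcform y, h]
        rfl
      have hrv : 2 ≤ r.val := by
        have h0 : r.val ≠ 0 := fun h => hr0 (Fin.ext (by simp [h]))
        have h1 : r.val ≠ 1 := fun h => hr1 (Fin.ext (by rw [h, val_one' hn2]))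
        omega
      exact caseROT hn c r hrv hcform
    · -- reflection
      have hστ : ∀ w : Fin n, w ≠ 0 → σ w = σ 1 - (w - 1) := by
        intro w hw
        have := hform' w hw
        rw [hε] at this
        rw [this]; ring
      have hσ0 : σ 0 = σ 1 + 1 := by
        by_cases h0 : σ 1 - σ 0 + 1 = 0
        · linear_combination -h0
        · exfalso
          have := hστ (σ 1 - σ 0 + 1) h0
          have h2 : σ (σ 1 - σ 0 + 1) = σ 0 := by rw [this]; ring
          have := hσinj _ _ h2
          exact h0 (by linear_combination this)
      have hcform : ∀ y, c y = (σ 1 + 1) - y := by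
        intro y
        have hy := huniq (c y) y rfl
        by_cases h0 : c y = 0
        · rw [h0] at hy ⊢
          rw [hσ0] at hy
          linear_combination hy
        · have := hστ (c y) h0
          rw [this] at hy
          linear_combination hy
      exact caseREFL hn c (σ 1 + 1) hcform

/-- The deep case: image misses exactly 0, `c 0 = c 1 = 1`, `c (-1) = -1`,
all merges are the fiber `{0,1}`. -/
theorem caseDeep (hn : 5 ≤ n) (c : Fin n → Fin n) (hcb : c ≠ cernyB n)
    (himg : ∀ m : Fin n, m ≠ 0 → ∃ x, c x = m)
    (Hpair : ∀ a b : Fin n, a ≠ b → c a = c b → (a = 0 ∧ b = 1) ∨ (a = 1 ∧ b = 0))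
    (hv1 : c 0 = 1) (hc11 : c 1 = 1) (htop : c (-1) = -1) : ShortSync n c ((n-1)^2) := by
  have hn2 : 2 ≤ n := by omega
  set σ := Function.invFun c with hσdef
  have hcσ : ∀ w : Fin n, w ≠ 0 → c (σ w) = w := fun w hw => Function.invFun_eq (himg w hw)
  have huniq : ∀ w : Fin n, w ≠ 0 → w ≠ 1 → ∀ x, c x = w → x = σ w := by
    intro w hw0 hw1 x hx
    by_contra hne
    rcases Hpair x (σ w) hne (by rw [hx, hcσ w hw0]) with ⟨h1, h2⟩ | ⟨h1, h2⟩
    · rw [h1, hv1] at hx; exact hw1 hx.symm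
    · rw [h1, hc11] at hx; exact hw1 hx.symm
  have hσinj : ∀ w w', w ≠ 0 → w' ≠ 0 → σ w = σ w' → w = w' := by
    intro w w' h h' heq
    rw [← hcσ w h, ← hcσ w' h', heq]
  have hne01 : ∀ w : Fin n, 2 ≤ w.val → w ≠ 0 ∧ w ≠ 1 := by
    intro w hw
    constructor
    · intro h; rw [h] at hw; simp at hw
    · intro h; rw [h, val_one' hn2] at hw; omega
  by_cases hbroken : ∃ w : Fin n, 2 ≤ w.val ∧ w.val ≤ n-2 ∧
      σ (w+1) - σ w ≠ 1 ∧ σ w - σ (w+1) ≠ 1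
  · obtain ⟨w, hw1, hw2, hd1, hd2⟩ := hbroken
    obtain ⟨hw0, hwone⟩ := hne01 w hw1
    have hw1v : (w+1).val = w.val + 1 := val_add_one_of_lt (by omega)
    obtain ⟨hw10, hw1one⟩ := hne01 (w+1) (by omega)
    have hAB : σ w ≠ σ (w+1) := by
      intro h
      have := hσinj _ _ hw0 hw10 h
      have h2 : (1 : Fin n) = 0 := by linear_combination -this
      exact one_ne_zero' hn2 h2
    apply caseR1' hn c w (by omega) hw2 (σ w) (σ (w+1)) hAB hd1 hd2
    intro x h1 h2
    constructor
    · intro hc; exact h1 (huniq w hw0 hwone x hc)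
    · intro hc; exact h2 (huniq (w+1) hw10 hw1one x hc)
  · push_neg at hbroken
    set τ : ℕ → Fin n := fun j => σ ((2 + j : ℕ) : Fin n) with hτ
    have hτeval : ∀ j, τ j = σ ((2 + j : ℕ) : Fin n) := fun j => rfl
    have hcastne : ∀ j : ℕ, j ≤ n - 3 → ((2 + j : ℕ) : Fin n) ≠ 0 := by
      intro j hj h
      have := congrArg Fin.val h
      rw [cast_val_small _ (by omega)] at this
      simp at this
    have hτinj : ∀ i, i ≤ n-3 → ∀ j, j ≤ n-3 → τ i = τ j → i = j := by
      intro i hi j hj h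
      have := hσinj _ _ (hcastne i hi) (hcastne j hj) h
      have hvi := congrArg Fin.val this
      rw [cast_val_small _ (by omega), cast_val_small _ (by omega)] at hvi
      omega
    have hτadj : ∀ j, j + 1 ≤ n-3 → τ (j+1) - τ j = 1 ∨ τ (j+1) - τ j = -1 := by
      intro j hj
      have hcast : ((2 + (j+1) : ℕ) : Fin n) = ((2 + j : ℕ) : Fin n) + 1 := by
        push_cast; ring
      have hval1 : ((2 + j : ℕ) : Fin n).val = 2 + j := cast_val_small _ (by omega)
      have hb := hbroken ((2 + j : ℕ) : Fin n) (by omega) (by omega)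
      rw [hτ]
      simp only []
      rw [hcast]
      rcases Classical.em (σ (((2 + j : ℕ) : Fin n) + 1) - σ ((2 + j : ℕ) : Fin n) = 1) with
        h | h
      · exact Or.inl h
      · right
        have := hb h
        linear_combination -this
    have hform := walk_formula τ (n-3) (walk_const τ (n-3) hτinj hτadj)
    have hε := hτadj 0 (by omega)
    norm_num at hε
    have hτ0 : τ 0 = σ 2 := by
      rw [hτeval 0]; norm_num
    set ε := τ 1 - τ 0 with hεdef
    -- top value: σ (-1) = -1
    have hσtop : σ (-1 : Fin n) = -1 :=
      (huniq (-1) (neg_one_ne_zero' hn2) (neg_one_ne_one' (by omega)) (-1) htop).symm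
    have htopeq : τ (n-3) = σ (-1 : Fin n) := by
      rw [hτeval (n-3)]
      congr 1
      have e1 : 2 + (n-3) = n - 1 := by omega
      rw [e1, neg_one_cast (by omega : 1 ≤ n)]
    have hkey : (-1 : Fin n) = σ 2 + ((n-3 : ℕ) : Fin n) * ε := by
      have := hform (n-3) le_rfl
      rw [htopeq, hσtop, hτ0] at this
      exact this
    rcases hε with hε | hε
    · -- would force c = cernyB
      exfalso
      have hσ2 : σ 2 = (2 : Fin n) := by
        rw [hε] at hkey
        have e1 : ((n-3 : ℕ) : Fin n) = -3 := by
          have h : ((n-3 : ℕ) : Fin n) + 3 = ((n : ℕ) : Fin n) := by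
            push_cast [Nat.cast_sub (by omega : 3 ≤ n)]
            ring
          rw [Fin.natCast_self] at h
          linear_combination h
        rw [e1] at hkey
        linear_combination -hkey
      have hid : ∀ x : Fin n, 2 ≤ x.val → c x = x := by
        intro x hx
        have hj : x.val - 2 ≤ n - 3 := by have := x.isLt; omega
        have hf := hform (x.val - 2) hj
        rw [hτeval (x.val - 2)] at hf
        have e1 : 2 + (x.val - 2) = x.val := by omega
        rw [e1, Fin.cast_val_eq_self, hτ0, hε, hσ2] at hf
        have e2 : ((x.val - 2 : ℕ) : Fin n) = x - 2 := by
          rw [Nat.cast_sub hx, Fin.cast_val_eq_self]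
          norm_num
        rw [e2] at hf
        have hσx : σ x = x := by rw [hf]; ring
        have hfix := hcσ x (hne01 x hx).1
        rw [hσx] at hfix
        exact hfix
      apply hcb
      funext x
      unfold cernyB
      by_cases h0 : x = 0
      · rw [h0]; simpa using hv1
      · rw [if_neg h0]
        by_cases h1 : x = 1
        · rw [h1]; exact hc11
        · apply hid
          have hv0 : x.val ≠ 0 := fun h => h0 (Fin.ext (by simp [h]))
          have hv1' : x.val ≠ 1 := fun h => h1 (Fin.ext (by rw [h, val_one' hn2]))
          omega
    · -- contradiction: σ (n-2) = 0
      exfalso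
      have hσ2 : σ 2 = -1 + ((n-3 : ℕ) : Fin n) := by
        rw [hε] at hkey
        linear_combination -hkey
      have hj : n - 4 ≤ n - 3 := by omega
      have hf := hform (n-4) hj
      rw [hτeval (n-4)] at hf
      have e1 : 2 + (n-4) = n - 2 := by omega
      rw [e1, hτ0, hε, hσ2] at hf
      have e2 : ((n-3 : ℕ) : Fin n) - ((n-4 : ℕ) : Fin n) = 1 := by
        rw [← Nat.cast_sub (by omega : n-4 ≤ n-3)]
        have e3 : n - 3 - (n - 4) = 1 := by omega
        rw [e3]
        norm_num
      have hσn2 : σ ((n-2 : ℕ) : Fin n) = 0 := by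
        rw [hf]
        have : (-1 + ((n-3:ℕ) : Fin n)) + ((n-4:ℕ) : Fin n) * (-1)
            = (((n-3:ℕ) : Fin n) - ((n-4:ℕ) : Fin n)) - 1 := by ring
        rw [this, e2]
        ring
      have hne : ((n-2 : ℕ) : Fin n) ≠ 0 := by
        intro h
        have := congrArg Fin.val h
        rw [cast_val_small _ (by omega)] at this
        simp at this
        omega
      have := hcσ ((n-2 : ℕ) : Fin n) hne
      rw [hσn2, hv1] at this
      have hvv := congrArg Fin.val this
      rw [val_one' hn2, cast_val_small _ (by omega)] at hvv
      omega


end Cerny18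

theorem cerny_no_critical_extension (n : ℕ) (hn : 5 ≤ n) [NeZero n]
    (c : Fin n → Fin n) (hca : c ≠ cernyA n) (hcb : c ≠ cernyB n) (hcid : c ≠ id) :
    ShortSync n c ((n - 1) ^ 2) := by
  have hn2 : 2 ≤ n := by omega
  by_cases hinj : Function.Injective c
  · exact Cerny18.casePerm hn c hinj hca hcid
  · rw [Function.not_injective_iff] at hinj
    obtain ⟨p, q, hpq, hne⟩ := hinj
    by_cases hpair2 : ∃ a b : Fin n, c a = c b ∧ 2 ≤ (b - a).val ∧ (b - a).val ≤ n-2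
    · obtain ⟨a, b, hab, h2, h2'⟩ := hpair2
      by_cases h3 : (b - a).val ≤ n - 3
      · exact Cerny18.casePC hn c a b h2 h3 hab
      · have hba0 : b - a ≠ 0 := by
          intro h
          rw [h] at h2
          simp at h2
        have hvneg : (a - b).val = n - (b - a).val := by
          have : a - b = -(b - a) := by ring
          rw [this, Cerny18.val_neg_of_ne_zero hba0]
        have hval2 : (a - b).val = 2 := by omega
        exact Cerny18.casePC hn c b a (by omega) (by omega) hab.symm
    · -- all merged pairs adjacent
      by_cases hE4 : ∃ y : Fin n, y ≠ 0 ∧ c y = c (y + 1)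
      · obtain ⟨y, hy0, hy⟩ := hE4
        exact Cerny18.caseE4 hn c y hy0 hy
      · push_neg at hE4
        have adjpair : ∀ a b : Fin n, a ≠ b → c a = c b →
            (a = 0 ∧ b = 1) ∨ (a = 1 ∧ b = 0) := by
          intro a b hneq hc
          have hd0 : b - a ≠ 0 := by
            intro h
            exact hneq (by linear_combination -h)
          have hd0v : (b - a).val ≠ 0 := fun h => hd0 (Fin.ext (by simp [h]))
          have hdlt := (b - a).isLt
          have hdval : (b - a).val = 1 ∨ (b - a).val = n - 1 := by
            by_contra hcon
            push_neg at hcon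
            exact hpair2 ⟨a, b, hc, by omega, by omega⟩
          rcases hdval with h | h
          · have hb : b = a + 1 := by
              have h1 : b - a = 1 := Fin.ext (by rw [h, Cerny18.val_one' hn2])
              linear_combination h1
            have ha0 : a = 0 := by
              by_contra hcon
              exact hE4 a hcon (by rw [← hb]; exact hc)
            left
            constructor
            · exact ha0
            · rw [hb, ha0]; ring
          · have hab' : a = b + 1 := by
              have hvneg : (a - b).val = n - (b - a).val := by
                have e : a - b = -(b - a) := by ring
                rw [e, Cerny18.val_neg_of_ne_zero hd0]
              have h1 : a - b = 1 := Fin.ext (by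
                rw [Cerny18.val_one' hn2]; omega)
              linear_combination h1
            have hb0 : b = 0 := by
              by_contra hcon
              exact hE4 b hcon (by rw [← hab']; exact hc.symm)
            right
            constructor
            · rw [hab', hb0]; ring
            · exact hb0
        have hc01 : c 0 = c 1 := by
          rcases adjpair p q hne hpq with ⟨h1, h2⟩ | ⟨h1, h2⟩
          · rw [h1, h2] at hpq; exact hpq
          · rw [h1, h2] at hpq; exact hpq.symm
        by_cases hmiss : ∃ m : Fin n, m ≠ 0 ∧ ∀ x, c x ≠ m
        · obtain ⟨m, hm0, hm⟩ := hmiss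
          exact Cerny18.caseA hn c m hm0 hm
        · push_neg at hmiss
          have h0img : ∀ x, c x ≠ 0 := by
            intro x hx
            have hsurj : Function.Surjective c := by
              intro m
              by_cases hm : m = 0
              · exact ⟨x, by rw [hx, hm]⟩
              · exact hmiss m hm
            have hinj' : Function.Injective c := Finite.injective_iff_surjective.2 hsurj
            exact hne (hinj' hpq)
          by_cases hv1 : c 0 = 1
          · have hc11 : c 1 = 1 := by rw [← hc01]; exact hv1
            by_cases htop : c (-1) = -1
            · exact Cerny18.caseDeep hn c hcb hmiss adjpair hv1 hc11 htop
            · -- E2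
              have hm1ne : (-1 : Fin n) ≠ 0 := Cerny18.neg_one_ne_zero' hn2
              obtain ⟨j0, hj0⟩ := hmiss (-1) hm1ne
              have huniq : ∀ x, c x = -1 → x = j0 := by
                intro x hx
                by_contra hxne
                rcases adjpair x j0 hxne (by rw [hx, hj0]) with ⟨h1, h2⟩ | ⟨h1, h2⟩
                · rw [h1, hv1] at hx
                  exact Cerny18.neg_one_ne_one' (by omega) hx.symm
                · rw [h1, hc11] at hx
                  exact Cerny18.neg_one_ne_one' (by omega) hx.symm
              have hj0v : j0.val ≤ n - 2 := by
                have hlt := j0.isLt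
                by_contra hcon
                push_neg at hcon
                have : j0 = -1 := by
                  rw [← Cerny18.neg_one_cast (by omega : 1 ≤ n)]
                  exact Fin.ext (by rw [Cerny18.cast_val_small _ (by omega)]; omega)
                rw [this] at hj0
                exact htop hj0
              exact Cerny18.caseE2 hn c j0 hj0v h0img huniq
          · -- E1
            obtain ⟨j0, hj0⟩ := hmiss 1 (Cerny18.one_ne_zero' hn2)
            have huniq : ∀ x, c x = 1 → x = j0 := by
              intro x hx
              by_contra hxne
              rcases adjpair x j0 hxne (by rw [hx, hj0]) with ⟨h1, h2⟩ | ⟨h1, h2⟩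
              · rw [h1] at hx
                exact hv1 hx
              · rw [h1, ← hc01] at hx
                exact hv1 hx
            exact Cerny18.caseE1 hn c j0 h0img huniq
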